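/- (Strong consistency of the FDAC estimator of the mean AR coefficient, exactly identified case) Let (Ω, P) be a probability space and let (A_i, B_i, C_i)_{i∈ℕ} be a sequence of integrable ℝ³-valued random vectors that are independent and identically distributed. Suppose there exist a probability space (Ω', P') carrying a measurable random variable φ : Ω' → ℝ with −1+ε₀ ≤ φ ≤ 1 P'-almost surely for some constant ε₀ > 0, a measurable random variable σ : Ω' → ℝ independent of φ with 0 < E'(σ²) < ∞, such that E(A₁) = 2 E'(σ²) E'[1/(1+φ)], E(B₁) = −E'(σ²) E'[(1−φ)/(1+φ)], and E(C₁) = −E'(σ²) E'[((1−φ)/(1+φ)) φ]. Then, P-almost surely, (∑_{i=1}^{n} (A_i + 2B_i + C_i)) / (∑_{i=1}^{n} (A_i + B_i)) converges to E'(φ) as n → ∞. -/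

import Mathlib

open MeasureTheory ProbabilityTheory Filter

/-- (Strong consistency of the FDAC estimator of the mean AR coefficient, exactly
identified case) Let `(A_i, B_i, C_i)` be an i.i.d. sequence of integrable `ℝ³`-valued
random vectors whose means coincide with the population moments implied by the stationary
heterogeneous panel AR(1) model with AR coefficient `φ` independent of the error scale `σ`
(defined on an auxiliary probability space `(Ω', P')`):
`E(A₁) = 2 E'(σ²) E'[1/(1+φ)]`, `E(B₁) = −E'(σ²) E'[(1−φ)/(1+φ)]`,
`E(C₁) = −E'(σ²) E'[((1−φ)/(1+φ)) φ]`. Then, almost surely,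
`(∑_{i=1}^{n} (A_i + 2B_i + C_i)) / (∑_{i=1}^{n} (A_i + B_i)) → E'(φ)` as `n → ∞`. -/
theorem fdac_strong_consistency
    {Ω : Type*} [MeasurableSpace Ω] (P : Measure Ω) [IsProbabilityMeasure P]
    (A B C : ℕ → Ω → ℝ)
    (hint : ∀ i : ℕ, Integrable (A i) P ∧ Integrable (B i) P ∧ Integrable (C i) P)
    (hindep : iIndepFun
      (fun i ω => (A i ω, B i ω, C i ω)) P)
    (hident : ∀ i : ℕ, IdentDistrib (fun ω => (A i ω, B i ω, C i ω))
      (fun ω => (A 0 ω, B 0 ω, C 0 ω)) P P)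
    {Ω' : Type*} [MeasurableSpace Ω'] (P' : Measure Ω') [IsProbabilityMeasure P']
    (φ σ : Ω' → ℝ) (ε₀ : ℝ) (hε₀ : 0 < ε₀)
    (hφm : Measurable φ) (hφbd : ∀ᵐ ω ∂P', -1 + ε₀ ≤ φ ω ∧ φ ω ≤ 1)
    (hσm : Measurable σ) (hφσ : IndepFun φ σ P')
    (hσ2int : Integrable (fun ω => (σ ω) ^ 2) P')
    (hσ2pos : 0 < ∫ ω, (σ ω) ^ 2 ∂P')
    (hA : ∫ ω, A 0 ω ∂P =
      2 * (∫ ω, (σ ω) ^ 2 ∂P') * ∫ ω, 1 / (1 + φ ω) ∂P')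
    (hB : ∫ ω, B 0 ω ∂P =
      -(∫ ω, (σ ω) ^ 2 ∂P') * ∫ ω, (1 - φ ω) / (1 + φ ω) ∂P')
    (hC : ∫ ω, C 0 ω ∂P =
      -(∫ ω, (σ ω) ^ 2 ∂P') * ∫ ω, ((1 - φ ω) / (1 + φ ω)) * φ ω ∂P') :
    ∀ᵐ ω ∂P, Tendsto (fun n : ℕ =>
        (∑ i ∈ Finset.range n, (A i ω + 2 * B i ω + C i ω)) /
          (∑ i ∈ Finset.range n, (A i ω + B i ω)))
      atTop (nhds (∫ ω, φ ω ∂P')) := by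
  obtain ⟨hA0, hB0, hC0⟩ := hint 0
  set S := ∫ ω, (σ ω) ^ 2 ∂P' with hSdef
  set m := ∫ ω, φ ω ∂P' with hmdef
  -- a.e. bound on 1 + φ
  have hpos : ∀ᵐ ω ∂P', (0:ℝ) < 1 + φ ω := by
    filter_upwards [hφbd] with ω hω
    linarith [hω.1]
  -- integrability of the bounded functions on Ω'
  have hb1 : Integrable (fun ω => 1 / (1 + φ ω)) P' := by
    refine Integrable.mono' (integrable_const (1/ε₀)) ?_ ?_
    · exact (measurable_const.div (measurable_const.add hφm)).aestronglyMeasurable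
    · filter_upwards [hφbd] with ω hω
      have h1 : ε₀ ≤ 1 + φ ω := by linarith [hω.1]
      have h0 : (0:ℝ) < 1 + φ ω := lt_of_lt_of_le hε₀ h1
      rw [Real.norm_eq_abs, abs_of_pos (one_div_pos.2 h0)]
      rw [div_le_div_iff₀ (by linarith) hε₀]
      nlinarith
  have hb2 : Integrable (fun ω => (1 - φ ω) / (1 + φ ω)) P' := by
    refine Integrable.mono' (integrable_const (2/ε₀)) ?_ ?_
    · exact ((measurable_const.sub hφm).div (measurable_const.add hφm)).aestronglyMeasurable
    · filter_upwards [hφbd] with ω hω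
      have h1 : ε₀ ≤ 1 + φ ω := by linarith [hω.1]
      have h2 : (0:ℝ) ≤ 1 - φ ω := by linarith [hω.2]
      have h0 : (0:ℝ) < 1 + φ ω := lt_of_lt_of_le hε₀ h1
      rw [Real.norm_eq_abs, abs_of_nonneg (div_nonneg h2 h0.le)]
      rw [div_le_div_iff₀ (by linarith) hε₀]
      nlinarith
  have hb3 : Integrable (fun ω => ((1 - φ ω) / (1 + φ ω)) * φ ω) P' := by
    refine Integrable.mono' (integrable_const (2/ε₀)) ?_ ?_
    · exact (((measurable_const.sub hφm).div (measurable_const.add hφm)).mul hφm).aestronglyMeasurable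
    · filter_upwards [hφbd] with ω hω
      have h1 : ε₀ ≤ 1 + φ ω := by linarith [hω.1]
      have h2 : (0:ℝ) ≤ 1 - φ ω := by linarith [hω.2]
      have habs : |φ ω| ≤ 1 := abs_le.2 ⟨by linarith [hω.1], hω.2⟩
      have h0 : (0:ℝ) < 1 + φ ω := lt_of_lt_of_le hε₀ h1
      rw [Real.norm_eq_abs, abs_mul, abs_of_nonneg (div_nonneg h2 h0.le)]
      calc (1 - φ ω) / (1 + φ ω) * |φ ω| ≤ (1 - φ ω) / (1 + φ ω) * 1 := by
            apply mul_le_mul_of_nonneg_left habs (div_nonneg h2 h0.le)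
        _ ≤ 2/ε₀ := by
            rw [mul_one, div_le_div_iff₀ (by linarith) hε₀]; nlinarith
  -- the two mean identities
  have key1 : ∫ ω, (A 0 ω + B 0 ω) ∂P = S := by
    rw [integral_add hA0 hB0, hA, hB]
    have : 2 * S * (∫ ω, 1 / (1 + φ ω) ∂P') + -S * (∫ ω, (1 - φ ω) / (1 + φ ω) ∂P')
        = S * ∫ ω, (2 * (1 / (1 + φ ω)) - (1 - φ ω) / (1 + φ ω)) ∂P' := by
      rw [integral_sub (hb1.const_mul 2) hb2, integral_const_mul 2]; ring
    rw [this]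
    have heq : ∫ ω, (2 * (1 / (1 + φ ω)) - (1 - φ ω) / (1 + φ ω)) ∂P' = 1 := by
      rw [show (1:ℝ) = ∫ _ω, (1:ℝ) ∂P' by simp]
      apply integral_congr_ae
      filter_upwards [hpos] with ω hω
      rw [show ∫ _ω : Ω', (1:ℝ) ∂P' = 1 by simp]
      field_simp
      ring
    rw [heq, mul_one]
  have key2 : ∫ ω, (A 0 ω + 2 * B 0 ω + C 0 ω) ∂P = S * m := by
    rw [integral_add (show Integrable (fun ω => A 0 ω + 2 * B 0 ω) P from
        hA0.add (hB0.const_mul 2)) hC0,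
      integral_add hA0 (hB0.const_mul 2), integral_const_mul 2, hA, hB, hC]
    have : 2 * S * (∫ ω, 1 / (1 + φ ω) ∂P') + 2 * (-S * (∫ ω, (1 - φ ω) / (1 + φ ω) ∂P'))
        + -S * (∫ ω, ((1 - φ ω) / (1 + φ ω)) * φ ω ∂P')
        = S * ∫ ω, (2 * (1 / (1 + φ ω)) - 2 * ((1 - φ ω) / (1 + φ ω))
            - ((1 - φ ω) / (1 + φ ω)) * φ ω) ∂P' := by
      rw [integral_sub (show Integrable
          (fun ω => 2 * (1 / (1 + φ ω)) - 2 * ((1 - φ ω) / (1 + φ ω))) P' from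
          ((hb1.const_mul 2)).sub (hb2.const_mul 2)) hb3,
        integral_sub (hb1.const_mul 2) (hb2.const_mul 2), integral_const_mul 2,
        integral_const_mul 2]
      ring
    rw [this]
    have heq : ∫ ω, (2 * (1 / (1 + φ ω)) - 2 * ((1 - φ ω) / (1 + φ ω))
        - ((1 - φ ω) / (1 + φ ω)) * φ ω) ∂P' = m := by
      rw [hmdef]
      apply integral_congr_ae
      filter_upwards [hpos] with ω hω
      field_simp
      ring
    rw [heq]
  -- strong law for the two combined sequences
  have mf : Measurable (fun p : ℝ × ℝ × ℝ => p.1 + p.2.1) :=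
    measurable_fst.add (measurable_fst.comp measurable_snd)
  have mg : Measurable (fun p : ℝ × ℝ × ℝ => p.1 + 2 * p.2.1 + p.2.2) :=
    (measurable_fst.add ((measurable_fst.comp measurable_snd).const_mul 2)).add
      (measurable_snd.comp measurable_snd)
  have slln1 : ∀ᵐ ω ∂P, Tendsto (fun n : ℕ =>
      (∑ i ∈ Finset.range n, (A i ω + B i ω)) / n) atTop (nhds S) := by
    have := strong_law_ae_real (μ := P) (fun i ω => A i ω + B i ω)
      (hA0.add hB0)
      (fun i j hij => ((hindep.indepFun hij).comp mf mf))
      (fun i => (hident i).comp mf)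
    rwa [key1] at this
  have slln2 : ∀ᵐ ω ∂P, Tendsto (fun n : ℕ =>
      (∑ i ∈ Finset.range n, (A i ω + 2 * B i ω + C i ω)) / n) atTop (nhds (S * m)) := by
    have := strong_law_ae_real (μ := P) (fun i ω => A i ω + 2 * B i ω + C i ω)
      ((hA0.add (hB0.const_mul 2)).add hC0)
      (fun i j hij => ((hindep.indepFun hij).comp mg mg))
      (fun i => (hident i).comp mg)
    rwa [key2] at this
  filter_upwards [slln1, slln2] with ω h1 h2
  have hS : S ≠ 0 := ne_of_gt hσ2pos
  have hdiv : Tendsto (fun n : ℕ =>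
      ((∑ i ∈ Finset.range n, (A i ω + 2 * B i ω + C i ω)) / n) /
        ((∑ i ∈ Finset.range n, (A i ω + B i ω)) / n)) atTop (nhds (S * m / S)) :=
    h2.div h1 hS
  rw [show S * m / S = m by field_simp] at hdiv
  refine hdiv.congr' ?_
  filter_upwards [eventually_ge_atTop 1] with n hn
  have hn' : (n : ℝ) ≠ 0 := by positivity
  rw [div_div_div_cancel_right₀ hn']
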